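/- Let 0 < p⁻ ≤ p < p⁺ < 1 and let q be the random variable taking value p⁻ with probability ((p⁺ − p)/(p⁺(1 − p⁺)))/D and value p⁺ with probability ((p − p⁻)/(p⁻(1 − p⁻)))/D, where D := (p⁺ − p)/(p⁺(1 − p⁺)) + (p − p⁻)/(p⁻(1 − p⁻)). Then E[p/q] − 1 = E[(1−p)/(1−q)] − 1 = (p⁺ − p)·(p − p⁻) / (p + p⁻p⁺ − p·(p⁻ + p⁺)), and moreover min(p⁻(1 − p⁻), p⁺(1 − p⁺)) ≤ p + p⁻p⁺ − p·(p⁻ + p⁺) ≤ max(p⁻(1 − p⁻), p⁺(1 − p⁺)). -/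

import Mathlib

/-- **Exact expectation identity for the randomized rounding scheme.**
With `q` taking value `p⁻` with probability `((p⁺ − p)/(p⁺(1 − p⁺)))/D` and `p⁺`
with probability `((p − p⁻)/(p⁻(1 − p⁻)))/D`, one has
`E[p/q] − 1 = E[(1−p)/(1−q)] − 1 = (p⁺ − p)(p − p⁻)/(p + p⁻p⁺ − p(p⁻ + p⁺))`,
and `p + p⁻p⁺ − p(p⁻ + p⁺)` lies between `min` and `max` of
`p⁻(1 − p⁻)` and `p⁺(1 − p⁺)`. -/
theorem randomized_rounding_expectation_identity
    (pm p pp : ℝ) (h0 : 0 < pm) (h1 : pm ≤ p) (h2 : p < pp) (h3 : pp < 1)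
    (D : ℝ) (hD : D = (pp - p) / (pp * (1 - pp)) + (p - pm) / (pm * (1 - pm))) :
    ((pp - p) / (pp * (1 - pp)) / D) * (p / pm)
        + ((p - pm) / (pm * (1 - pm)) / D) * (p / pp) - 1
      = (pp - p) * (p - pm) / (p + pm * pp - p * (pm + pp)) ∧
    ((pp - p) / (pp * (1 - pp)) / D) * ((1 - p) / (1 - pm))
        + ((p - pm) / (pm * (1 - pm)) / D) * ((1 - p) / (1 - pp)) - 1
      = (pp - p) * (p - pm) / (p + pm * pp - p * (pm + pp)) ∧
    min (pm * (1 - pm)) (pp * (1 - pp)) ≤ p + pm * pp - p * (pm + pp) ∧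
    p + pm * pp - p * (pm + pp) ≤ max (pm * (1 - pm)) (pp * (1 - pp)) := by
  have hpm : pm ≠ 0 := ne_of_gt h0
  have h1pm : (1:ℝ) - pm ≠ 0 := by nlinarith
  have hpp : pp ≠ 0 := by nlinarith
  have h1pp : (1:ℝ) - pp ≠ 0 := by nlinarith
  have hDpos : 0 < D := by
    rw [hD]
    have h4 : 0 < pp * (1 - pp) := by nlinarith
    have h5 : 0 < pm * (1 - pm) := by nlinarith
    have := div_pos (by linarith : (0:ℝ) < pp - p) h4
    have := div_nonneg (by linarith : (0:ℝ) ≤ p - pm) h5.le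
    linarith
  have hDne : D ≠ 0 := ne_of_gt hDpos
  have hEmin : min (pm * (1 - pm)) (pp * (1 - pp)) ≤ p + pm * pp - p * (pm + pp) := by
    rcases le_or_gt (pm + pp) 1 with h | h
    · refine le_trans (min_le_left _ _) ?_; nlinarith
    · refine le_trans (min_le_right _ _) ?_; nlinarith
  have hEmax : p + pm * pp - p * (pm + pp) ≤ max (pm * (1 - pm)) (pp * (1 - pp)) := by
    rcases le_or_gt (pm + pp) 1 with h | h
    · refine le_trans ?_ (le_max_right _ _); nlinarith
    · refine le_trans ?_ (le_max_left _ _); nlinarith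
  have hEpos : 0 < p + pm * pp - p * (pm + pp) := by
    have : 0 < min (pm * (1 - pm)) (pp * (1 - pp)) := by
      apply lt_min <;> nlinarith
    linarith
  have hEne : p + pm * pp - p * (pm + pp) ≠ 0 := ne_of_gt hEpos
  have hppm : pp - pm ≠ 0 := by nlinarith
  have hDval : D = (p + pm * pp - p * (pm + pp)) * (pp - pm)
      / (pm * (1 - pm) * (pp * (1 - pp))) := by
    rw [hD]; field_simp; ring
  refine ⟨?_, ?_, hEmin, hEmax⟩ <;>
  · rw [hDval]; set E := p + pm * pp - p * (pm + pp) with hE; field_simp; rw [hE]; ring
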